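/- Let n ≥ 2 and λ ∈ (0,1). There exist vectors ξ₀, ξ₁, ξ₂, ξ₃ ∈ ℝⁿ with ξ₀ + ξ₁ = ξ₂ + ξ₃, |ξ₀|² = 1/2, |ξ₁|² = 1/2, |ξ₂|² = (1 − λ²)², |ξ₃|² = λ², and the four vectors pairwise non-collinear. Moreover the direction ξ₃/|ξ₃| can be chosen independent of λ. -/

import Mathlib

set_option maxHeartbeats 4000000

/-- four-wave direction decomposition ξ₀ + ξ₁ = ξ₂ + ξ₃ with
|ξ₀|² = |ξ₁|² = 1/2, |ξ₂|² = (1-λ²)², |ξ₃|² = λ², pairwise non-collinear,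
and the direction of ξ₃ independent of λ. -/
theorem stmt_1 (n : ℕ) (hn : 2 ≤ n) :
    ∃ ξhat : EuclideanSpace ℝ (Fin n), ‖ξhat‖ = 1 ∧
      ∀ lam : ℝ, lam ∈ Set.Ioo (0:ℝ) 1 →
        ∃ ξ0 ξ1 ξ2 ξ3 : EuclideanSpace ℝ (Fin n),
          ξ0 + ξ1 = ξ2 + ξ3 ∧
          ‖ξ0‖ ^ 2 = 1 / 2 ∧ ‖ξ1‖ ^ 2 = 1 / 2 ∧
          ‖ξ2‖ ^ 2 = (1 - lam ^ 2) ^ 2 ∧ ‖ξ3‖ ^ 2 = lam ^ 2 ∧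
          ξ3 = lam • ξhat ∧
          (∀ i j : Fin 4, i ≠ j → ∀ c : ℝ,
            ![ξ0, ξ1, ξ2, ξ3] i ≠ c • ![ξ0, ξ1, ξ2, ξ3] j) := by
  have h2n : 1 < n := by omega
  have h01 : (⟨0, by omega⟩ : Fin n) ≠ ⟨1, by omega⟩ := by simp [Fin.ext_iff]
  obtain ⟨i0, i1, h01⟩ : ∃ i0 i1 : Fin n, i0 ≠ i1 :=
    ⟨⟨0, by omega⟩, ⟨1, by omega⟩, h01⟩
  obtain ⟨e0, he0⟩ : ∃ v : EuclideanSpace ℝ (Fin n), v = EuclideanSpace.single i0 1 := ⟨_, rfl⟩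
  obtain ⟨e1, he1⟩ : ∃ v : EuclideanSpace ℝ (Fin n), v = EuclideanSpace.single i1 1 := ⟨_, rfl⟩
  have hV_norm : ∀ p q : ℝ, ‖p • e0 + q • e1‖ ^ 2 = p ^ 2 + q ^ 2 := by
    intro p q
    rw [← real_inner_self_eq_norm_sq]
    simp only [inner_add_left, inner_add_right, real_inner_smul_left, real_inner_smul_right]
    simp [he0, he1, inner_add_left, inner_add_right, real_inner_smul_left,
      real_inner_smul_right, EuclideanSpace.inner_single_left,
      EuclideanSpace.inner_single_right, EuclideanSpace.single_apply, h01, h01.symm]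
    ring
  have hV_ne : ∀ p q r w : ℝ, p*w - q*r ≠ 0 → ∀ c : ℝ,
      p • e0 + q • e1 ≠ c • (r • e0 + w • e1) := by
    intro p q r w hc c heq
    have h0 : (p • e0 + q • e1) i0 = (c • (r • e0 + w • e1)) i0 := by rw [heq]
    have h1 : (p • e0 + q • e1) i1 = (c • (r • e0 + w • e1)) i1 := by rw [heq]
    simp [he0, he1, EuclideanSpace.single_apply, h01, h01.symm, PiLp.add_apply,
      PiLp.smul_apply] at h0 h1
    apply hc
    rw [h0, h1]; ring
  refine ⟨e1, by simp [he1], ?_⟩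
  rintro lam ⟨hl0, hl1⟩
  obtain ⟨b, hb⟩ : ∃ b : ℝ, b = lam := ⟨_, rfl⟩
  rw [← hb]
  obtain ⟨a, ha⟩ : ∃ a : ℝ, a = 1 - b ^ 2 := ⟨_, rfl⟩
  rw [← ha]
  have hb0 : 0 < b := by rw [hb]; exact hl0
  have hb1 : b < 1 := by rw [hb]; exact hl1
  have hb2lt : b^2 < 1 := pow_lt_one₀ hb0.le hb1 two_ne_zero
  have hb2pos : 0 < b^2 := pow_pos hb0 2
  have ha0 : 0 < a := by rw [ha]; linarith
  have ha1 : a < 1 := by rw [ha]; linarith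
  have ha2lt : a^2 < 1 := pow_lt_one₀ ha0.le ha1 two_ne_zero
  have hr2 : Real.sqrt 2 ^ 2 = 2 := Real.sq_sqrt (by norm_num)
  have hr2n : 0 ≤ Real.sqrt 2 := Real.sqrt_nonneg 2
  have hab1 : 1 < a + b := by rw [ha]; linarith [mul_pos hb0 (sub_pos.2 hb1)]
  have hU1 : 1 < (a + b) ^ 2 := by
    linarith [mul_pos (show (0:ℝ) < a + b by linarith) (sub_pos.2 hab1)]
  -- choose a good s
  obtain ⟨s, hs1, hsU, hL1, hL4⟩ : ∃ s : ℝ, 1 ≤ s ∧ s < (a+b)^2 ∧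
      (1 - Real.sqrt 2 * b) * s ≠ -(b^2 - a^2) ∧
      (Real.sqrt 2 * a - 1) * s ≠ -(b^2 - a^2) := by
    have keyL1 : ∀ s1 s2 : ℝ, s1 ≠ s2 →
        (1 - Real.sqrt 2 * b) * s1 = -(b^2 - a^2) →
        (1 - Real.sqrt 2 * b) * s2 = -(b^2 - a^2) → False := by
      intro s1 s2 hne he1' he2'
      have h3 : (1 - Real.sqrt 2 * b) * (s1 - s2) = 0 := by linear_combination he1' - he2'
      have h4 : 1 - Real.sqrt 2 * b = 0 := by
        rcases mul_eq_zero.1 h3 with h | h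
        · exact h
        · exact absurd (sub_eq_zero.1 h) hne
      have h5 : b^2 - a^2 = 0 := by linear_combination he1' - s1 * h4
      have h6 : 2 * b^2 = 1 := by
        linear_combination (-(Real.sqrt 2 * b + 1)) * h4 - b^2 * hr2
      have h7 : a = 1/2 := by rw [ha]; linarith
      have h8 : a^2 = 1/4 := by rw [h7]; norm_num
      linarith [h5, h6, h8]
    have keyL4 : ∀ s1 s2 : ℝ, s1 ≠ s2 →
        (Real.sqrt 2 * a - 1) * s1 = -(b^2 - a^2) →
        (Real.sqrt 2 * a - 1) * s2 = -(b^2 - a^2) → False := by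
      intro s1 s2 hne he1' he2'
      have h3 : (Real.sqrt 2 * a - 1) * (s1 - s2) = 0 := by linear_combination he1' - he2'
      have h4 : Real.sqrt 2 * a - 1 = 0 := by
        rcases mul_eq_zero.1 h3 with h | h
        · exact h
        · exact absurd (sub_eq_zero.1 h) hne
      have h5 : b^2 - a^2 = 0 := by linear_combination he1' - s1 * h4
      have h6 : 2 * a^2 = 1 := by
        linear_combination (Real.sqrt 2 * a + 1) * h4 - a^2 * hr2
      have h8 : b^2 = 1 - a := by rw [ha]; ring
      have h9 : a = 1/2 := by linarith
      have h10 : a^2 = 1/4 := by rw [h9]; norm_num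
      linarith [h6, h10]
    by_contra hcon
    push_neg at hcon
    obtain ⟨d, hd⟩ : ∃ d : ℝ, d = ((a+b)^2 - 1)/3 := ⟨_, rfl⟩
    have hdpos : 0 < d := by rw [hd]; linarith
    have H : ∀ z : ℝ, 1 ≤ z → z < (a+b)^2 →
        ((1 - Real.sqrt 2 * b) * z = -(b^2 - a^2)) ∨
        ((Real.sqrt 2 * a - 1) * z = -(b^2 - a^2)) := by
      intro z h1 h2
      by_cases hA : (1 - Real.sqrt 2 * b) * z = -(b^2 - a^2)
      · exact Or.inl hA
      · exact Or.inr (hcon z h1 h2 hA)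
    have H0 := H 1 le_rfl (by linarith)
    have H1 := H (1 + d) (by linarith) (by rw [hd]; linarith)
    have H2 := H (1 + 2*d) (by linarith) (by rw [hd]; linarith)
    have hne01 : (1:ℝ) ≠ 1 + d := by intro h; linarith
    have hne02 : (1:ℝ) ≠ 1 + 2*d := by intro h; linarith
    have hne12 : (1:ℝ) + d ≠ 1 + 2*d := by intro h; linarith
    rcases H0 with A0 | B0 <;> rcases H1 with A1 | B1 <;> rcases H2 with A2 | B2
    · exact keyL1 _ _ hne01 A0 A1
    · exact keyL1 _ _ hne01 A0 A1
    · exact keyL1 _ _ hne02 A0 A2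
    · exact keyL4 _ _ hne12 B1 B2
    · exact keyL1 _ _ hne12 A1 A2
    · exact keyL4 _ _ hne02 B0 B2
    · exact keyL4 _ _ hne01 B0 B1
    · exact keyL4 _ _ hne01 B0 B1
  have hspos : 0 < s := by linarith
  have hab54 : a + b ≤ 5/4 := by rw [ha]; linarith [sq_nonneg (b - 1/2)]
  have hs2 : s < 2 := by
    have h1 : 0 ≤ (5/4 - (a+b)) * (5/4 + (a+b)) :=
      mul_nonneg (by linarith) (by linarith)
    linarith [hsU]
  obtain ⟨y, hydef⟩ : ∃ y : ℝ, y = (s - a^2 - b^2)/(2*b) := ⟨_, rfl⟩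
  have hsrel : s = a^2 + b^2 + 2*b*y := by rw [hydef]; field_simp; ring
  have habd1 : a - b - 1 < 0 := by rw [ha]; linarith
  have habd2 : 0 < a - b + 1 := by rw [ha]; linarith
  have habd : (a - b)^2 < 1 := by linarith [mul_neg_of_neg_of_pos habd1 habd2]
  have hylt : y < a := by
    have h1 : (2*b)*(a - y) = (a+b)^2 - s := by linear_combination hsrel
    have h2 : 0 < (2*b)*(a - y) := by rw [h1]; linarith [hsU]
    rcases mul_pos_iff.mp h2 with ⟨_, h⟩ | ⟨h, _⟩
    · linarith
    · linarith
  have hygt : -a < y := by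
    have h1 : (2*b)*(y + a) = s - (a - b)^2 := by linear_combination -hsrel
    have h2 : 0 < (2*b)*(y + a) := by rw [h1]; linarith [habd, hs1]
    rcases mul_pos_iff.mp h2 with ⟨_, h⟩ | ⟨h, _⟩
    · linarith
    · linarith
  have hx2pos : 0 < a^2 - y^2 := by
    have h1 : 0 < (a - y)*(a + y) := mul_pos (by linarith) (by linarith)
    linarith [h1]
  obtain ⟨x, hxdef⟩ : ∃ x : ℝ, x = Real.sqrt (a^2 - y^2) := ⟨_, rfl⟩
  have hx2 : x^2 = a^2 - y^2 := by rw [hxdef]; exact Real.sq_sqrt hx2pos.le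
  have hxpos : 0 < x := by rw [hxdef]; exact Real.sqrt_pos.2 hx2pos
  have htarg : 0 < (2 - s)/(4*s) := div_pos (by linarith) (by linarith)
  obtain ⟨t, htdef⟩ : ∃ t : ℝ, t = Real.sqrt ((2 - s)/(4*s)) := ⟨_, rfl⟩
  have ht2 : t^2 = (2 - s)/(4*s) := by rw [htdef]; exact Real.sq_sqrt htarg.le
  have htpos : 0 < t := by rw [htdef]; exact Real.sqrt_pos.2 htarg
  have hybpos : 0 < y + b := by
    have h1 : (2*b)*(y+b) = s + b^2 - a^2 := by linear_combination -hsrel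
    have h2 : 0 < s + b^2 - a^2 := by linarith [ha2lt, hs1, sq_nonneg b]
    have h3 : 0 < (2*b)*(y+b) := by rw [h1]; exact h2
    rcases mul_pos_iff.mp h3 with ⟨_, h⟩ | ⟨h, _⟩
    · exact h
    · linarith
  have hEpos : 0 < a^2 + b*y := by
    have h1 : 2*(a^2 + b*y) = s + a^2 - b^2 := by linear_combination -hsrel
    have h2 : 0 < s + a^2 - b^2 := by linarith [hb2lt, hs1, sq_nonneg a]
    linarith
  have hsum : x^2 + (y+b)^2 = s := by rw [hx2]; linear_combination -hsrel
  have ht2s : t^2 * s = (2 - s)/4 := by rw [ht2]; field_simp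
  -- the key non-collinearity scalar facts
  have hne03 : x/2 - t*(y+b) ≠ 0 := by
    intro h
    have hxe : x = 2*(t*(y+b)) := by linarith
    have h1 : x^2 = 4*t^2*(y+b)^2 := by rw [hxe]; ring
    have h2b : s*x^2 = (2-s)*(y+b)^2 := by
      rw [h1, ht2]; field_simp
    have h3 : s^2 = 2*(y+b)^2 := by linear_combination h2b - s*hx2 + s*hsrel
    have h4 : (s - Real.sqrt 2 * (y+b)) * (s + Real.sqrt 2 * (y+b)) = 0 := by
      linear_combination h3 - (y+b)^2 * hr2
    have h5 : s = Real.sqrt 2 * (y+b) := by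
      rcases mul_eq_zero.1 h4 with h' | h'
      · linarith [sub_eq_zero.1 h']
      · have hnn := mul_nonneg hr2n hybpos.le
        linarith
    have h7 : Real.sqrt 2 * s = 2*(y+b) := by
      linear_combination Real.sqrt 2 * h5 + (y+b) * hr2
    exact hL1 (by linear_combination hsrel - b*h7)
  have F01 : (x/2 - t*(y+b)) * ((y+b)/2 - t*x) - ((y+b)/2 + t*x) * (x/2 + t*(y+b)) ≠ 0 := by
    have hq : (x/2 - t*(y+b)) * ((y+b)/2 - t*x) - ((y+b)/2 + t*x) * (x/2 + t*(y+b))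
        = -(t*s) := by linear_combination (-t) * hsum
    rw [hq]
    exact neg_ne_zero.2 (mul_pos htpos hspos).ne'
  have F02 : (x/2 - t*(y+b)) * y - ((y+b)/2 + t*x) * x ≠ 0 := by
    have hq : (x/2 - t*(y+b)) * y - ((y+b)/2 + t*x) * x
        = -(b*x/2 + t*(a^2 + b*y)) := by linear_combination (-t) * hx2
    rw [hq]
    have hp : 0 < b*x/2 + t*(a^2 + b*y) := by
      have h1 := mul_pos htpos hEpos
      have h2 := mul_pos hb0 hxpos
      linarith
    exact neg_ne_zero.2 hp.ne'
  have F03 : (x/2 - t*(y+b)) * b - ((y+b)/2 + t*x) * 0 ≠ 0 := by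
    simp only [mul_zero, sub_zero]
    exact mul_ne_zero hne03 hb0.ne'
  have F12 : (x/2 + t*(y+b)) * y - ((y+b)/2 - t*x) * x ≠ 0 := by
    have hq : (x/2 + t*(y+b)) * y - ((y+b)/2 - t*x) * x
        = -(b*x)/2 + t*(a^2 + b*y) := by linear_combination t * hx2
    rw [hq]
    intro h
    have hbx : b*x = 2*(t*(a^2 + b*y)) := by linarith
    have h1 : (b*x)^2 = 4*t^2*(a^2 + b*y)^2 := by rw [hbx]; ring
    have h2 : s*(b*x)^2 = (2-s)*(a^2 + b*y)^2 := by
      rw [h1, ht2]; field_simp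
    have hkey : (4*a^2 - 2)*s^2 + 4*(b^2 - a^2)*s - 2*(b^2 - a^2)^2 = 0 := by
      linear_combination 4*h2 + (-4*s*b^2)*hx2 + (4*a^2*s - 2*s + 2*b^2 - 6*a^2 - 4*b*y)*hsrel
    have hfac : ((Real.sqrt 2 * a + 1)*s - (b^2 - a^2)) * ((Real.sqrt 2 * a - 1)*s + (b^2 - a^2)) = 0 := by
      linear_combination (1/2)*hkey + (a^2*s^2)*hr2
    have hpos1 : 0 < (Real.sqrt 2 * a + 1)*s - (b^2 - a^2) := by
      linarith [mul_nonneg (mul_nonneg hr2n ha0.le) hspos.le, hb2lt, hs1, sq_nonneg a]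
    have hz := (mul_eq_zero.1 hfac).resolve_left hpos1.ne'
    exact hL4 (by linarith)
  have F13 : (x/2 + t*(y+b)) * b - ((y+b)/2 - t*x) * 0 ≠ 0 := by
    simp only [mul_zero, sub_zero]
    have hp : 0 < x/2 + t*(y+b) := by
      have h1 := mul_pos htpos hybpos
      linarith
    exact (mul_pos hp hb0).ne'
  have F23 : x * b - y * 0 ≠ 0 := by
    simp only [mul_zero, sub_zero]
    exact (mul_pos hxpos hb0).ne'
  refine ⟨(x/2 - t*(y+b)) • e0 + ((y+b)/2 + t*x) • e1,
         (x/2 + t*(y+b)) • e0 + ((y+b)/2 - t*x) • e1,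
         x • e0 + y • e1,
         (0:ℝ) • e0 + b • e1, ?_, ?_, ?_, ?_, ?_, ?_, ?_⟩
  · module
  · rw [hV_norm]; linear_combination (1/4 + t^2) * hsum + ht2s
  · rw [hV_norm]; linear_combination (1/4 + t^2) * hsum + ht2s
  · rw [hV_norm]; linear_combination hx2
  · rw [hV_norm]; ring
  · rw [zero_smul, zero_add]
  · intro i j hij c
    fin_cases i <;> fin_cases j <;>
      simp only [Matrix.cons_val_zero, Matrix.cons_val_one, Matrix.head_cons,
        Matrix.cons_val_two, Matrix.tail_cons, Matrix.cons_val_three]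
    · exact absurd rfl hij
    · exact hV_ne _ _ _ _ F01 c
    · exact hV_ne _ _ _ _ F02 c
    · exact hV_ne _ _ _ _ F03 c
    · exact hV_ne _ _ _ _ (fun h => F01 (by linear_combination -h)) c
    · exact absurd rfl hij
    · exact hV_ne _ _ _ _ F12 c
    · exact hV_ne _ _ _ _ F13 c
    · exact hV_ne _ _ _ _ (fun h => F02 (by linear_combination -h)) c
    · exact hV_ne _ _ _ _ (fun h => F12 (by linear_combination -h)) c
    · exact absurd rfl hij
    · exact hV_ne _ _ _ _ F23 c
    · exact hV_ne _ _ _ _ (fun h => F03 (by linear_combination -h)) c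
    · exact hV_ne _ _ _ _ (fun h => F13 (by linear_combination -h)) c
    · exact hV_ne _ _ _ _ (fun h => F23 (by linear_combination -h)) c
    · exact absurd rfl hij
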